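/- Let A be a discrete valuation ring with fraction field K, uniformizer π, and residue field k. There exists a group homomorphism sp_π : K^M_n(K) → K^M_n(k) satisfying sp_π({π^{i_1} u_1, ..., π^{i_n} u_n}) = {ū_1, ..., ū_n} for all integers i_1, ..., i_n and units u_1, ..., u_n of A. -/

import Mathlib

/-- The set of relations defining Milnor K-theory: multilinearity relations and
Steinberg relations, inside the free abelian group on `n`-tuples of units. -/
def MilnorRelSet (F : Type*) [Field F] (n : ℕ) : Set (FreeAbelianGroup (Fin n → Fˣ)) :=
  { x | ∃ (a : Fin n → Fˣ) (i : Fin n) (b : Fˣ),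
      x = FreeAbelianGroup.of (Function.update a i (a i * b)) -
          FreeAbelianGroup.of a - FreeAbelianGroup.of (Function.update a i b) } ∪
  { x | ∃ (a : Fin n → Fˣ) (i j : Fin n), i ≠ j ∧ ((a i : F) + (a j : F) = 1) ∧
      x = FreeAbelianGroup.of a }

/-- The `n`-th Milnor K-group of a field `F`. -/
def MilnorK (n : ℕ) (F : Type*) [Field F] : Type _ :=
  FreeAbelianGroup (Fin n → Fˣ) ⧸ AddSubgroup.closure (MilnorRelSet F n)

instance (n : ℕ) (F : Type*) [Field F] : AddCommGroup (MilnorK n F) :=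
  QuotientAddGroup.Quotient.addCommGroup _

/-- The symbol `{a 0, ..., a (n-1)}` in Milnor K-theory. -/
def MilnorSymbol {n : ℕ} {F : Type*} [Field F] (a : Fin n → Fˣ) : MilnorK n F :=
  QuotientAddGroup.mk (FreeAbelianGroup.of a)

section MilnorLemmas

open Function

variable {F : Type*} [Field F] {n : ℕ}

/-- The quotient map as an `AddMonoidHom`. -/
def MilnorMk (F : Type*) [Field F] (n : ℕ) :
    FreeAbelianGroup (Fin n → Fˣ) →+ MilnorK n F :=
  QuotientAddGroup.mk' (AddSubgroup.closure (MilnorRelSet F n))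

lemma MilnorSymbol_eq_mk (a : Fin n → Fˣ) :
    MilnorSymbol a = MilnorMk F n (FreeAbelianGroup.of a) := rfl

lemma MilnorSymbol_rel (a : Fin n → Fˣ) (i : Fin n) (b : Fˣ) :
    MilnorSymbol (update a i (a i * b)) = MilnorSymbol a + MilnorSymbol (update a i b) := by
  have hmem : FreeAbelianGroup.of (update a i (a i * b)) - FreeAbelianGroup.of a -
      FreeAbelianGroup.of (update a i b) ∈ AddSubgroup.closure (MilnorRelSet F n) :=
    AddSubgroup.subset_closure (Or.inl ⟨a, i, b, rfl⟩)
  have h0 : MilnorMk F n (FreeAbelianGroup.of (update a i (a i * b)) - FreeAbelianGroup.of a -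
      FreeAbelianGroup.of (update a i b)) = 0 :=
    (QuotientAddGroup.eq_zero_iff _).mpr hmem
  rw [map_sub, map_sub, sub_sub, sub_eq_zero] at h0
  rw [MilnorSymbol_eq_mk, MilnorSymbol_eq_mk, MilnorSymbol_eq_mk, h0]

lemma MilnorSymbol_update_mul (a : Fin n → Fˣ) (i : Fin n) (b c : Fˣ) :
    MilnorSymbol (update a i (b * c)) =
      MilnorSymbol (update a i b) + MilnorSymbol (update a i c) := by
  have := MilnorSymbol_rel (update a i b) i c
  rwa [update_self, update_idem, update_idem] at this

lemma MilnorSymbol_eq_zero_of_eq_one (a : Fin n → Fˣ) (i : Fin n) (h : a i = 1) :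
    MilnorSymbol a = 0 := by
  have := MilnorSymbol_update_mul a i 1 1
  rw [one_mul] at this
  have h1 : MilnorSymbol (update a i 1) = 0 := by
    have h2 := this
    nth_rewrite 1 [← add_zero (MilnorSymbol (update a i 1))] at h2
    exact (add_left_cancel h2).symm
  rw [← h, update_eq_self] at h1
  exact h1

lemma MilnorSymbol_update_inv (a : Fin n → Fˣ) (i : Fin n) (b : Fˣ) :
    MilnorSymbol (update a i b⁻¹) = - MilnorSymbol (update a i b) := by
  have := MilnorSymbol_update_mul a i b b⁻¹
  rw [mul_inv_cancel] at this
  have h0 : MilnorSymbol (update a i (1 : Fˣ)) = 0 :=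
    MilnorSymbol_eq_zero_of_eq_one _ i (update_self _ _ _)
  rw [h0] at this
  exact eq_neg_of_add_eq_zero_right this.symm

lemma MilnorSymbol_steinberg (a : Fin n → Fˣ) (i j : Fin n) (hij : i ≠ j)
    (h : (a i : F) + (a j : F) = 1) : MilnorSymbol a = 0 := by
  exact (QuotientAddGroup.eq_zero_iff _).mpr
    (AddSubgroup.subset_closure (Or.inr ⟨a, i, j, hij, h, rfl⟩))

lemma MilnorSymbol_neg (a : Fin n → Fˣ) (i j : Fin n) (hij : i ≠ j)
    (h : (a j : F) = -(a i : F)) : MilnorSymbol a = 0 := by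
  by_cases h1 : a i = 1
  · exact MilnorSymbol_eq_zero_of_eq_one a i h1
  · set x : Fˣ := a i with hx
    have hx1 : (x : F) ≠ 1 := fun hc => h1 (Units.ext hc)
    have hxne : (x : F) ≠ 0 := x.ne_zero
    have hy1ne : (1 : F) - (x : F) ≠ 0 := sub_ne_zero.mpr (Ne.symm hx1)
    have hxinv1 : ((x : F))⁻¹ ≠ 1 := by
      intro hc
      apply hx1
      rw [← inv_inv (x : F), hc, inv_one]
    have hy2ne : (1 : F) - ((x : F))⁻¹ ≠ 0 := sub_ne_zero.mpr (Ne.symm hxinv1)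
    set y1 : Fˣ := Units.mk0 (1 - (x : F)) hy1ne with hy1
    set y2 : Fˣ := Units.mk0 (1 - ((x : F))⁻¹) hy2ne with hy2
    have key : a j = y1 * y2⁻¹ := by
      apply Units.ext
      rw [Units.val_mul, Units.val_inv_eq_inv_val, h, hy1, hy2, Units.val_mk0, Units.val_mk0]
      have hm : (x : F) - 1 ≠ 0 := sub_ne_zero.mpr hx1
      rw [eq_mul_inv_iff_mul_eq₀ hy2ne]
      field_simp
      ring
    -- first term
    have hS1 : MilnorSymbol (update a j y1) = 0 := by
      apply MilnorSymbol_steinberg _ i j hij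
      rw [update_of_ne hij, update_self]
      simp [hy1, ← hx]
    -- second term
    have hS2 : MilnorSymbol (update a j y2) = 0 := by
      set A2 := update a j y2 with hA2
      have hA2i : A2 i = x := by rw [hA2, update_of_ne hij]
      have h3 : MilnorSymbol (update A2 i x⁻¹) = 0 := by
        apply MilnorSymbol_steinberg _ i j hij
        rw [update_self, update_of_ne (Ne.symm hij)]
        have : A2 j = y2 := by rw [hA2, update_self]
        rw [this]
        simp [hy2]
      have h4 := MilnorSymbol_update_inv A2 i x
      rw [← hA2i, update_eq_self] at h4
      rw [← hA2i] at h3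
      rw [h3] at h4
      exact (neg_eq_zero.mp h4.symm)
    calc MilnorSymbol a = MilnorSymbol (update a j (a j)) := by rw [update_eq_self]
      _ = MilnorSymbol (update a j (y1 * y2⁻¹)) := by rw [key]
      _ = MilnorSymbol (update a j y1) + MilnorSymbol (update a j y2⁻¹) :=
          MilnorSymbol_update_mul a j y1 y2⁻¹
      _ = 0 := by rw [hS1, MilnorSymbol_update_inv, hS2, neg_zero, add_zero]

end MilnorLemmas

section DVR

open Function IsLocalRing

lemma key_aux (A : Type*) [CommRing A] [IsDomain A] [IsDiscreteValuationRing A]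
    (K : Type*) [Field K] [Algebra A K] [IsFractionRing A K]
    (π : A) (hπ : Irreducible π) {n : ℕ} (b : Fin n → (ResidueField A)ˣ)
    (i j : Fin n) (hij : i ≠ j) (r s : ℤ) (hrs : r ≤ s) (u v : Aˣ)
    (hbi : b i = Units.map (residue A).toMonoidHom u)
    (hbj : b j = Units.map (residue A).toMonoidHom v)
    (heq : (algebraMap A K π) ^ r * algebraMap A K (u : A) +
      (algebraMap A K π) ^ s * algebraMap A K (v : A) = 1) :
    MilnorSymbol b = 0 := by
  have hinj : Function.Injective (algebraMap A K) := IsFractionRing.injective A K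
  have hπ0 : π ≠ 0 := hπ.ne_zero
  set πK := algebraMap A K π with hπK
  have hπK0 : πK ≠ 0 := fun hc => hπ0 (hinj (by rw [← hπK, hc, map_zero]))
  have hresπ : residue A π = 0 := (residue_eq_zero_iff π).mpr
    ((mem_maximalIdeal π).mpr (mem_nonunits_iff.mpr hπ.not_isUnit))
  have hresu : residue A (u : A) ≠ 0 := (u.isUnit.map (residue A)).ne_zero
  rcases lt_or_ge r 0 with hr | hr
  · -- r < 0
    have hKeq : algebraMap A K (u : A) + πK ^ ((s - r).toNat) * algebraMap A K (v : A)
        = πK ^ ((-r).toNat) := by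
      have h2 := congrArg (fun t => πK ^ (-r) * t) heq
      simp only [mul_add, mul_one] at h2
      rw [← mul_assoc, ← mul_assoc, ← zpow_add₀ hπK0, ← zpow_add₀ hπK0,
        neg_add_cancel, zpow_zero, one_mul] at h2
      rw [show (-r) + s = ((s - r).toNat : ℤ) by omega] at h2
      rw [show (-r : ℤ) = (((-r).toNat : ℤ)) by omega] at h2
      rw [zpow_natCast, zpow_natCast] at h2
      exact h2
    have hA : (u : A) + π ^ (s - r).toNat * (v : A) = π ^ (-r).toNat :=
      hinj (by rw [map_add, map_mul, map_pow, map_pow]; exact hKeq)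
    have hres := congrArg (residue A) hA
    rw [map_add, map_mul, map_pow, map_pow, hresπ,
      zero_pow (show (-r).toNat ≠ 0 by omega)] at hres
    rcases eq_or_lt_of_le hrs with hsr | hsr
    · rw [show (s - r).toNat = 0 by omega, pow_zero, one_mul] at hres
      apply MilnorSymbol_neg b i j hij
      rw [hbi, hbj]
      exact eq_neg_of_add_eq_zero_right hres
    · rw [zero_pow (show (s - r).toNat ≠ 0 by omega), zero_mul, add_zero] at hres
      exact absurd hres hresu
  · -- 0 ≤ r
    have hs : (0 : ℤ) ≤ s := le_trans hr hrs
    rw [show r = (r.toNat : ℤ) by omega, show s = (s.toNat : ℤ) by omega,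
      zpow_natCast, zpow_natCast] at heq
    have hA : π ^ r.toNat * (u : A) + π ^ s.toNat * (v : A) = 1 :=
      hinj (by rw [map_add, map_mul, map_mul, map_pow, map_pow, map_one]; exact heq)
    have hres := congrArg (residue A) hA
    rw [map_add, map_mul, map_mul, map_pow, map_pow, map_one, hresπ] at hres
    rcases eq_or_lt_of_le hr with hr0 | hr0
    · rw [show r.toNat = 0 by omega, pow_zero, one_mul] at hres
      rcases eq_or_lt_of_le hs with hs0 | hs0
      · rw [show s.toNat = 0 by omega, pow_zero, one_mul] at hres
        apply MilnorSymbol_steinberg b i j hij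
        rw [hbi, hbj]
        exact hres
      · rw [zero_pow (show s.toNat ≠ 0 by omega), zero_mul, add_zero] at hres
        apply MilnorSymbol_eq_zero_of_eq_one b i
        rw [hbi]
        exact Units.ext hres
    · rw [zero_pow (show r.toNat ≠ 0 by omega), zero_mul,
        zero_pow (show s.toNat ≠ 0 by omega), zero_mul, add_zero] at hres
      exact absurd hres.symm one_ne_zero

end DVR

open Function IsLocalRing

/-- Existence of the specialisation map `sp_π : K^M_n(K) → K^M_n(k)` for a DVR `A` with
fraction field `K`, uniformizer `π` and residue field `k`: it sends
`{π^{i_1}u_1, ..., π^{i_n}u_n}` to `{ū_1, ..., ū_n}` for units `u_i` of `A`. -/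
theorem specialisation_map_exists
    (A : Type*) [CommRing A] [IsDomain A] [IsDiscreteValuationRing A]
    (K : Type*) [Field K] [Algebra A K] [IsFractionRing A K]
    (π : A) (hπ : Irreducible π) (p : Kˣ) (hp : (p : K) = algebraMap A K π) (n : ℕ) :
    ∃ sp : MilnorK n K →+ MilnorK n (IsLocalRing.ResidueField A),
      ∀ (m : Fin n → ℤ) (u : Fin n → Aˣ),
        sp (MilnorSymbol (fun i => p ^ (m i) * Units.map (algebraMap A K).toMonoidHom (u i))) =
          MilnorSymbol (fun i => Units.map (IsLocalRing.residue A).toMonoidHom (u i)) := by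
  classical
  have hinj : Function.Injective (algebraMap A K) := IsFractionRing.injective A K
  have hπ0 : π ≠ 0 := hπ.ne_zero
  set πK := algebraMap A K π with hπK
  have hπK0 : πK ≠ 0 := fun hc => hπ0 (hinj (by rw [← hπK, hc, map_zero]))
  set φ : Aˣ →* Kˣ := Units.map (algebraMap A K).toMonoidHom with hφ
  set ρ : Aˣ →* (ResidueField A)ˣ := Units.map (residue A).toMonoidHom with hρ
  have hφcoe : ∀ w : Aˣ, ((φ w : Kˣ) : K) = algebraMap A K (w : A) := fun w => rfl
  -- uniqueness of decompositions
  have uniq0 : ∀ (m m' : ℤ), m' ≤ m → ∀ (w w' : Aˣ), p ^ m * φ w = p ^ m' * φ w' → w = w' := by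
    intro m m' hle w w' hEq
    have hK : (p : K) ^ m * algebraMap A K (w : A) = (p : K) ^ m' * algebraMap A K (w' : A) := by
      have := congrArg Units.val hEq
      simpa [Units.val_mul, Units.val_zpow_eq_zpow_val, hφcoe] using this
    rw [hp] at hK
    have hK2 : πK ^ ((m - m').toNat) * algebraMap A K (w : A) = algebraMap A K (w' : A) := by
      have h2 := congrArg (fun t => πK ^ (-m') * t) hK
      rw [← mul_assoc, ← mul_assoc, ← zpow_add₀ hπK0, ← zpow_add₀ hπK0,
        neg_add_cancel, zpow_zero, one_mul] at h2
      rw [show -m' + m = ((m - m').toNat : ℤ) by omega, zpow_natCast] at h2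
      exact h2
    have hA : π ^ (m - m').toNat * (w : A) = (w' : A) :=
      hinj (by rw [map_mul, map_pow]; exact hK2)
    refine IsDiscreteValuationRing.unit_mul_pow_congr_unit hπ w w' ((m - m').toNat) 0 ?_
    rw [pow_zero, mul_one, ← hA]
    ring
  have uniq : ∀ (m m' : ℤ) (w w' : Aˣ), p ^ m * φ w = p ^ m' * φ w' → w = w' := by
    intro m m' w w' h
    rcases le_total m' m with hle | hle
    · exact uniq0 m m' hle w w' h
    · exact (uniq0 m' m hle w' w h.symm).symm
  -- existence of decompositions
  have exdec : ∀ x : Kˣ, ∃ (m : ℤ) (w : Aˣ), x = p ^ m * φ w := by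
    intro x
    obtain ⟨a, c, hc, hac⟩ := IsFractionRing.div_surjective (A := A) (x : K)
    have hc0 : c ≠ 0 := nonZeroDivisors.ne_zero hc
    have hcK : algebraMap A K c ≠ 0 := fun h => hc0 (hinj (by rw [h, map_zero]))
    have ha0 : a ≠ 0 := by
      intro h
      apply x.ne_zero
      rw [← hac, h, map_zero, zero_div]
    obtain ⟨na, ua, hna⟩ := IsDiscreteValuationRing.eq_unit_mul_pow_irreducible ha0 hπ
    obtain ⟨nc, uc, hnc⟩ := IsDiscreteValuationRing.eq_unit_mul_pow_irreducible hc0 hπ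
    have hucK : algebraMap A K ((uc : A)) ≠ 0 :=
      fun h => uc.ne_zero (hinj (by rw [h, map_zero]))
    refine ⟨(na : ℤ) - nc, ua * uc⁻¹, Units.ext ?_⟩
    rw [Units.val_mul, Units.val_zpow_eq_zpow_val, hp, map_mul φ, map_inv φ,
      Units.val_mul, Units.val_inv_eq_inv_val, hφcoe, hφcoe,
      zpow_sub₀ hπK0, zpow_natCast, zpow_natCast]
    rw [← hac, hna, hnc, map_mul, map_mul, map_pow, map_pow]
    rw [← hπK]
    field_simp
  choose dm dw hdw using exdec
  set f : Kˣ → (ResidueField A)ˣ := fun x => ρ (dw x) with hf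
  have f_spec : ∀ (x : Kˣ) (m : ℤ) (w : Aˣ), x = p ^ m * φ w → f x = ρ w := by
    intro x m w hx
    have h := uniq (dm x) m (dw x) w ((hdw x).symm.trans hx)
    rw [hf]
    simp only
    rw [h]
  have f_mul : ∀ x y : Kˣ, f (x * y) = f x * f y := by
    intro x y
    have hxy : x * y = p ^ (dm x + dm y) * φ (dw x * dw y) := by
      conv_lhs => rw [hdw x, hdw y]
      rw [zpow_add, map_mul φ]
      exact mul_mul_mul_comm _ _ _ _
    rw [f_spec (x * y) _ _ hxy, map_mul]
  -- the lift on the free abelian group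
  set g : (Fin n → Kˣ) → MilnorK n (ResidueField A) :=
    fun a => MilnorSymbol (fun t => f (a t)) with hg
  set Φ : FreeAbelianGroup (Fin n → Kˣ) →+ MilnorK n (ResidueField A) :=
    FreeAbelianGroup.lift g with hΦ
  have hΦof : ∀ a, Φ (FreeAbelianGroup.of a) = g a := fun a => FreeAbelianGroup.lift_apply_of (f := g) a
  have hker : MilnorRelSet K n ⊆ (Φ.ker : Set _) := by
    rintro x (⟨a, i, c, rfl⟩ | ⟨a, i, j, hij, hsum, rfl⟩)
    · show Φ _ = 0
      rw [map_sub, map_sub, hΦof, hΦof, hΦof]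
      have hcomp : ∀ c' : Kˣ,
          (fun t => f (update a i c' t)) = update (fun t => f (a t)) i (f c') := by
        intro c'
        funext t
        by_cases ht : t = i
        · subst ht; rw [update_self, update_self]
        · rw [update_of_ne ht, update_of_ne ht]
      rw [hg]
      simp only
      rw [hcomp, hcomp, f_mul]
      have hrel := MilnorSymbol_rel (fun t => f (a t)) i (f c)
      rw [hrel]
      abel
    · show Φ _ = 0
      rw [hΦof, hg]
      simp only
      obtain ⟨r, w, hi⟩ : ∃ r w, a i = p ^ r * φ w := ⟨_, _, hdw (a i)⟩
      obtain ⟨s, v, hj⟩ : ∃ s v, a j = p ^ s * φ v := ⟨_, _, hdw (a j)⟩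
      have hfi : f (a i) = ρ w := f_spec _ _ _ hi
      have hfj : f (a j) = ρ v := f_spec _ _ _ hj
      have hsum' : πK ^ r * algebraMap A K (w : A) + πK ^ s * algebraMap A K (v : A) = 1 := by
        have h1 : ((a i : Kˣ) : K) + ((a j : Kˣ) : K) = 1 := hsum
        rw [hi, hj] at h1
        simpa [Units.val_mul, Units.val_zpow_eq_zpow_val, hp, hφcoe] using h1
      have hbi : (fun t => f (a t)) i = ρ w := hfi
      have hbj : (fun t => f (a t)) j = ρ v := hfj
      rcases le_total r s with hrs | hrs
      · exact key_aux A K π hπ (fun t => f (a t)) i j hij r s hrs w v hbi hbj hsum'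
      · exact key_aux A K π hπ (fun t => f (a t)) j i hij.symm s r hrs v w hbj hbi
          (by rw [add_comm]; exact hsum')
  have hcl : ∀ x ∈ AddSubgroup.closure (MilnorRelSet K n), Φ x = 0 := by
    intro x hx
    exact AddMonoidHom.mem_ker.mp ((AddSubgroup.closure_le Φ.ker).mpr hker hx)
  refine ⟨QuotientAddGroup.lift _ Φ hcl, ?_⟩
  intro m u
  have hlift : QuotientAddGroup.lift _ Φ hcl
      (MilnorSymbol (fun i => p ^ (m i) * φ (u i))) =
      Φ (FreeAbelianGroup.of (fun i => p ^ (m i) * φ (u i))) := rfl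
  refine hlift.trans ?_
  rw [hΦof, hg]
  simp only
  congr 1
  funext t
  exact f_spec _ (m t) (u t) rfl
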